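/- Let Ω ⊂ ℝⁿ be an open bounded set with the Lebesgue measure and let (X,d) be a locally compact Hadamard space. Let T, R ∈ L²(Ω,X), let ε > 0, and let {φ⁽ʲ⁾}_{j∈ℕ} and φ̂ be admissible diffeomorphisms of Ω with det Dφ⁽ʲ⁾(x) ≥ ε and det Dφ̂(x) ≥ ε for all x ∈ Ω, j ∈ ℕ, such that sup_{x∈Ω} |φ⁽ʲ⁾(x) − φ̂(x)| → 0 as j → ∞. Then lim_{j→∞} ∫_Ω d(T(φ⁽ʲ⁾(x)), R(x))² dx = ∫_Ω d(T(φ̂(x)), R(x))² dx. -/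

import Mathlib

open MeasureTheory Set Filter


section Auxiliary

open Metric
open scoped ENNReal NNReal Topology

/-- Hopf–Rinow: a locally compact, complete, geodesic metric space has compact closed balls. -/
lemma aux_hopf_rinow {X : Type*} [MetricSpace X] [CompleteSpace X] [LocallyCompactSpace X]
    (hgeo : ∀ x y : X, ∃ γ : ℝ → X, γ 0 = x ∧ γ 1 = y ∧
      ∀ s ∈ Icc (0:ℝ) 1, ∀ t ∈ Icc (0:ℝ) 1, dist (γ s) (γ t) = |s - t| * dist x y)
    (a : X) (R : ℝ) : IsCompact (closedBall a R) := by
  by_contra hR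
  set S : Set ℝ := {r : ℝ | IsCompact (closedBall a r)} with hS
  have mono : ∀ {r r' : ℝ}, r' ≤ r → r ∈ S → r' ∈ S := fun {r r'} h hr =>
    hr.of_isClosed_subset isClosed_closedBall (closedBall_subset_closedBall h)
  have loc : ∀ x : X, ∃ ρ > 0, IsCompact (closedBall x ρ) := by
    intro x
    obtain ⟨K, hKc, hKn⟩ := exists_compact_mem_nhds x
    obtain ⟨r0, hr0, hsub⟩ := nhds_basis_closedBall.mem_iff.1 hKn
    exact ⟨r0, hr0, hKc.of_isClosed_subset isClosed_closedBall hsub⟩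
  obtain ⟨r0, hr0, hr0S⟩ := loc a
  have hr0S' : r0 ∈ S := hr0S
  have hbdd : BddAbove S := ⟨R, fun r hr => le_of_not_gt fun hlt => hR (mono hlt.le hr)⟩
  have hne : S.Nonempty := ⟨r0, hr0S'⟩
  set m : ℝ := sSup S with hm
  have hr0m : r0 ≤ m := le_csSup hbdd hr0S'
  have hmpos : 0 < m := lt_of_lt_of_le hr0 hr0m
  have hTB : TotallyBounded (closedBall a m) := by
    rw [Metric.totallyBounded_iff]
    intro δ hδ
    obtain ⟨r1, hr1S, hr1⟩ := exists_lt_of_lt_csSup hne (show m - δ/2 < m by linarith)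
    set r : ℝ := max r1 r0 with hrdef
    have hrS : r ∈ S := by
      rcases max_cases r1 r0 with ⟨h1, _⟩ | ⟨h1, _⟩ <;> rw [hrdef, h1]
      exacts [hr1S, hr0S']
    have hrpos : 0 < r := lt_of_lt_of_le hr0 (le_max_right _ _)
    have hrgt : m - δ/2 < r := lt_of_lt_of_le hr1 (le_max_left _ _)
    obtain ⟨t, htfin, hcov⟩ := Metric.totallyBounded_iff.1 hrS.totallyBounded (δ/2) (by linarith)
    refine ⟨t, htfin, fun x hx => ?_⟩
    rcases le_or_gt (dist x a) r with hxr | hxr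
    · obtain ⟨y, hyt, hy⟩ := mem_iUnion₂.1 (hcov (mem_closedBall.2 hxr))
      exact mem_iUnion₂.2 ⟨y, hyt, mem_ball.2 (lt_of_lt_of_le (mem_ball.1 hy) (by linarith))⟩
    · have hd : (0:ℝ) < dist a x := by rw [dist_comm]; linarith
      obtain ⟨γ, hγ0, hγ1, hγd⟩ := hgeo a x
      set d : ℝ := dist a x with hddef
      set t₀ : ℝ := r / d with ht₀def
      have ht₀mem : t₀ ∈ Icc (0:ℝ) 1 := by
        constructor
        · positivity
        · rw [ht₀def, div_le_one hd]
          rw [dist_comm] at hxr; linarith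
      have h0mem : (0:ℝ) ∈ Icc (0:ℝ) 1 := ⟨le_refl _, zero_le_one⟩
      have h1mem : (1:ℝ) ∈ Icc (0:ℝ) 1 := ⟨zero_le_one, le_refl _⟩
      have hza : dist (γ t₀) a = r := by
        have := hγd t₀ ht₀mem 0 h0mem
        rw [hγ0] at this
        rw [this, sub_zero, abs_of_nonneg ht₀mem.1, ht₀def, div_mul_cancel₀ _ (ne_of_gt hd)]
      have hxz : dist x (γ t₀) < δ/2 := by
        have := hγd 1 h1mem t₀ ht₀mem
        rw [hγ1] at this
        rw [this, abs_of_nonneg (by linarith [ht₀mem.2] : (0:ℝ) ≤ 1 - t₀), sub_mul, one_mul,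
          ht₀def, div_mul_cancel₀ _ (ne_of_gt hd)]
        have hxm : dist x a ≤ m := mem_closedBall.1 hx
        rw [dist_comm] at hxm
        linarith
      have hz : γ t₀ ∈ closedBall a r := mem_closedBall.2 (le_of_eq hza)
      obtain ⟨y, hyt, hy⟩ := mem_iUnion₂.1 (hcov hz)
      refine mem_iUnion₂.2 ⟨y, hyt, mem_ball.2 ?_⟩
      calc dist x y ≤ dist x (γ t₀) + dist (γ t₀) y := dist_triangle _ _ _
        _ < δ/2 + δ/2 := add_lt_add hxz (mem_ball.1 hy)
        _ = δ := by ring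
  have hmK : IsCompact (closedBall a m) := TotallyBounded.isCompact_of_isClosed hTB isClosed_closedBall
  choose ρ hρpos hρc using loc
  obtain ⟨t, htmem, hcov⟩ := hmK.elim_nhds_subcover (fun x => ball x (ρ x / 2))
    (fun x _ => ball_mem_nhds x (half_pos (hρpos x)))
  have hane : a ∈ closedBall a m := mem_closedBall_self hmpos.le
  have htne : t.Nonempty := by
    obtain ⟨x, hx, _⟩ := mem_iUnion₂.1 (hcov hane)
    exact ⟨x, hx⟩
  set ρ₀ : ℝ := t.inf' htne (fun x => ρ x / 2) with hρ₀def
  have hρ₀pos : 0 < ρ₀ := by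
    rw [hρ₀def, Finset.lt_inf'_iff]
    exact fun x _ => half_pos (hρpos x)
  have hρ₀le : ∀ x ∈ t, ρ₀ ≤ ρ x / 2 := fun x hx => Finset.inf'_le _ hx
  have hsub : closedBall a (m + ρ₀) ⊆ ⋃ x ∈ t, closedBall x (ρ x) := by
    intro y hy
    rcases le_or_gt (dist y a) m with hym | hym
    · obtain ⟨x, hx, hyx⟩ := mem_iUnion₂.1 (hcov (mem_closedBall.2 hym))
      exact mem_iUnion₂.2 ⟨x, hx, mem_closedBall.2
        (le_trans (mem_ball.1 hyx).le (by linarith [hρpos x]))⟩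
    · have hd : (0:ℝ) < dist a y := by rw [dist_comm]; linarith
      obtain ⟨γ, hγ0, hγ1, hγd⟩ := hgeo a y
      set d : ℝ := dist a y with hddef
      set t₀ : ℝ := m / d with ht₀def
      have hym' : d ≤ m + ρ₀ := by rw [hddef, dist_comm]; exact mem_closedBall.1 hy
      have ht₀mem : t₀ ∈ Icc (0:ℝ) 1 := by
        constructor
        · positivity
        · rw [ht₀def, div_le_one hd]
          rw [dist_comm] at hym; linarith
      have h0mem : (0:ℝ) ∈ Icc (0:ℝ) 1 := ⟨le_refl _, zero_le_one⟩
      have h1mem : (1:ℝ) ∈ Icc (0:ℝ) 1 := ⟨zero_le_one, le_refl _⟩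
      have hza : dist (γ t₀) a = m := by
        have := hγd t₀ ht₀mem 0 h0mem
        rw [hγ0] at this
        rw [this, sub_zero, abs_of_nonneg ht₀mem.1, ht₀def, div_mul_cancel₀ _ (ne_of_gt hd)]
      have hyz : dist y (γ t₀) ≤ ρ₀ := by
        have := hγd 1 h1mem t₀ ht₀mem
        rw [hγ1] at this
        rw [this, abs_of_nonneg (by linarith [ht₀mem.2] : (0:ℝ) ≤ 1 - t₀), sub_mul, one_mul,
          ht₀def, div_mul_cancel₀ _ (ne_of_gt hd)]
        linarith
      obtain ⟨x, hx, hzx⟩ := mem_iUnion₂.1 (hcov (mem_closedBall.2 (le_of_eq hza)))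
      refine mem_iUnion₂.2 ⟨x, hx, mem_closedBall.2 ?_⟩
      calc dist y x ≤ dist y (γ t₀) + dist (γ t₀) x := dist_triangle _ _ _
        _ ≤ ρ₀ + ρ x / 2 := add_le_add hyz (mem_ball.1 hzx).le
        _ ≤ ρ x / 2 + ρ x / 2 := by linarith [hρ₀le x hx]
        _ = ρ x := by ring
  have hbig : IsCompact (closedBall a (m + ρ₀)) := by
    refine IsCompact.of_isClosed_subset ?_ isClosed_closedBall hsub
    exact t.finite_toSet.isCompact_biUnion fun x _ => hρc x
  have : m + ρ₀ ≤ m := le_csSup hbdd hbig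
  linarith

lemma aux_sigma_compact {X : Type*} [MetricSpace X] [CompleteSpace X] [LocallyCompactSpace X]
    (hgeo : ∀ x y : X, ∃ γ : ℝ → X, γ 0 = x ∧ γ 1 = y ∧
      ∀ s ∈ Icc (0:ℝ) 1, ∀ t ∈ Icc (0:ℝ) 1, dist (γ s) (γ t) = |s - t| * dist x y)
    (a : X) : SigmaCompactSpace X := by
  refine ⟨⟨fun k => closedBall a k, fun k => aux_hopf_rinow hgeo a k, ?_⟩⟩
  refine iUnion_eq_univ_iff.2 fun x => ?_
  obtain ⟨k, hk⟩ := exists_nat_ge (dist x a)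
  exact ⟨k, mem_closedBall.2 hk⟩

/-- Quadratic triangle-type inequality with a weight. -/
lemma aux_sq_dist_weighted {X : Type*} [MetricSpace X] {θ : ℝ} (hθ : 0 < θ) (x y z : X) :
    dist x z ^ 2 ≤ (1 + θ) * dist y z ^ 2 + (1 + 1/θ) * dist x y ^ 2 := by
  have ht := dist_triangle x y z
  set a := dist x y
  set b := dist y z
  have h2ab : 2*a*b ≤ (1/θ)*a^2 + θ*b^2 := by
    have h := sq_nonneg (a - θ*b)
    have h' := div_nonneg h hθ.le
    have hexp : (a - θ*b)^2/θ = (1/θ)*a^2 - 2*a*b + θ*b^2 := by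
      field_simp
      ring
    rw [hexp] at h'
    linarith
  have hsq : dist x z ^ 2 ≤ (a+b)^2 := by
    have h0 : (0:ℝ) ≤ dist x z := dist_nonneg
    nlinarith [ht, dist_nonneg (x := x) (y := z)]
  nlinarith [hsq, h2ab]

/-- Quadratic bound via two intermediate points. -/
lemma aux_sq_dist3 {X : Type*} [MetricSpace X] (x y z w : X) :
    dist x w ^ 2 ≤ 3 * dist x y ^ 2 + 3 * dist y z ^ 2 + 3 * dist z w ^ 2 := by
  have ht := dist_triangle4 x y z w
  have hsq : dist x w ^ 2 ≤ (dist x y + dist y z + dist z w)^2 := by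
    nlinarith [ht, dist_nonneg (x := x) (y := w)]
  nlinarith [hsq, sq_nonneg (dist x y - dist y z), sq_nonneg (dist y z - dist z w),
    sq_nonneg (dist x y - dist z w)]

end Auxiliary
/-- An admissible diffeomorphism of `Ω`: a bijection of `Ω` onto itself which is
continuously differentiable on `Ω` with continuously differentiable inverse. -/
def IsAdmissibleDiffeo {n : ℕ} (Ω : Set (EuclideanSpace ℝ (Fin n)))
    (φ : EuclideanSpace ℝ (Fin n) → EuclideanSpace ℝ (Fin n)) : Prop :=
  Set.BijOn φ Ω Ω ∧ ContDiffOn ℝ 1 φ Ω ∧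
    ∃ ψ : EuclideanSpace ℝ (Fin n) → EuclideanSpace ℝ (Fin n),
      (∀ x ∈ Ω, ψ (φ x) = x) ∧ (∀ x ∈ Ω, φ (ψ x) = x) ∧ ContDiffOn ℝ 1 ψ Ω

section CV

open scoped ENNReal NNReal Topology

/-- Change of variables bound for admissible diffeomorphisms with Jacobian bounded below. -/
lemma aux_cv_bound {n : ℕ} {Ω : Set (EuclideanSpace ℝ (Fin n))} (hΩo : IsOpen Ω)
    {φ : EuclideanSpace ℝ (Fin n) → EuclideanSpace ℝ (Fin n)}
    (hφ : IsAdmissibleDiffeo Ω φ) {ε : ℝ} (hε : 0 < ε)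
    (hdet : ∀ x ∈ Ω, ε ≤ (fderiv ℝ φ x).det)
    (h : EuclideanSpace ℝ (Fin n) → ℝ≥0∞) :
    ∫⁻ x in Ω, h (φ x) ≤ (ENNReal.ofReal ε)⁻¹ * ∫⁻ x in Ω, h x := by
  have hder : ∀ x ∈ Ω, HasFDerivWithinAt φ (fderiv ℝ φ x) Ω x := fun x hx =>
    (((hφ.2.1.differentiableOn one_ne_zero).differentiableAt (hΩo.mem_nhds hx)).hasFDerivAt).hasFDerivWithinAt
  have key := lintegral_image_eq_lintegral_abs_det_fderiv_mul volume hΩo.measurableSet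
    hder hφ.1.injOn h
  rw [hφ.1.image_eq] at key
  have hεne : ENNReal.ofReal ε ≠ 0 := by simp [hε, ENNReal.ofReal_eq_zero, not_le]
  have h2 : ENNReal.ofReal ε * ∫⁻ x in Ω, h (φ x) ≤ ∫⁻ x in Ω, h x := by
    rw [key, ← lintegral_const_mul' _ _ ENNReal.ofReal_ne_top]
    refine setLIntegral_mono_ae' hΩo.measurableSet ?_
    filter_upwards with x hx
    gcongr
    exact le_trans (hdet x hx) (le_abs_self _)
  calc ∫⁻ x in Ω, h (φ x)
      = (ENNReal.ofReal ε)⁻¹ * (ENNReal.ofReal ε * ∫⁻ x in Ω, h (φ x)) := by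
        rw [← mul_assoc, ENNReal.inv_mul_cancel hεne ENNReal.ofReal_ne_top, one_mul]
    _ ≤ (ENNReal.ofReal ε)⁻¹ * ∫⁻ x in Ω, h x := by gcongr

end CV

section IND

open Metric
open scoped ENNReal NNReal Topology

lemma aux_indicator_conv {n : ℕ} {Ω : Set (EuclideanSpace ℝ (Fin n))}
    (hΩo : IsOpen Ω) (hΩb : Bornology.IsBounded Ω) {ε : ℝ} (hε : 0 < ε)
    {φ : ℕ → EuclideanSpace ℝ (Fin n) → EuclideanSpace ℝ (Fin n)}
    {φhat : EuclideanSpace ℝ (Fin n) → EuclideanSpace ℝ (Fin n)}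
    (hφ : ∀ j, IsAdmissibleDiffeo Ω (φ j)) (hφhat : IsAdmissibleDiffeo Ω φhat)
    (hdet : ∀ j, ∀ x ∈ Ω, ε ≤ (fderiv ℝ (φ j) x).det)
    (hdethat : ∀ x ∈ Ω, ε ≤ (fderiv ℝ φhat x).det)
    (hconv : TendstoUniformlyOn φ φhat atTop Ω)
    {A : Set (EuclideanSpace ℝ (Fin n))} (hA : MeasurableSet A) (hAΩ : A ⊆ Ω) :
    Tendsto (fun j => ∫⁻ x in Ω,
        ENNReal.ofReal |A.indicator 1 (φ j x) - A.indicator 1 (φhat x)|)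
      atTop (𝓝 0) := by
  have mΩ : MeasurableSet Ω := hΩo.measurableSet
  have hμΩ : volume Ω ≠ ⊤ := hΩb.measure_lt_top.ne
  have hAfin : volume A ≠ ⊤ := (lt_of_le_of_lt (measure_mono hAΩ) hΩb.measure_lt_top).ne
  set c₀ : ℝ≥0∞ := (ENNReal.ofReal ε)⁻¹ with hc₀
  have hc₀top : c₀ ≠ ⊤ := by
    simp [hc₀, ENNReal.inv_ne_top, ENNReal.ofReal_eq_zero, not_le, hε]
  rw [ENNReal.tendsto_nhds_zero]
  intro η hη
  set β : ℝ≥0∞ := (η/2/2)/(c₀+1) with hβ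
  have hβ0 : β ≠ 0 := by
    refine (ENNReal.div_pos ?_ ?_).ne'
    · simp only [ne_eq, ENNReal.div_eq_zero_iff]
      push_neg
      refine ⟨⟨hη.ne', by norm_num⟩, by norm_num⟩
    · exact ENNReal.add_ne_top.2 ⟨hc₀top, ENNReal.one_ne_top⟩
  have hc₀β : c₀ * β ≤ η/2/2 := by
    calc c₀ * β ≤ (c₀ + 1) * β := by gcongr; exact le_self_add
    _ ≤ η/2/2 := ENNReal.mul_le_of_le_div' le_rfl
  obtain ⟨K, hKA, hKc, hKm⟩ := hA.exists_isCompact_diff_lt hAfin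
    (show β/2 ≠ 0 by simp [ENNReal.div_eq_zero_iff, hβ0])
  obtain ⟨U, hAU, hUo, hUm⟩ := hA.exists_isOpen_diff_lt hAfin
    (show β/2 ≠ 0 by simp [ENNReal.div_eq_zero_iff, hβ0])
  have hUK : volume (U \ K) ≤ β := by
    calc volume (U \ K) ≤ volume ((U \ A) ∪ (A \ K)) := by
          apply measure_mono; intro y hy
          by_cases hyA : y ∈ A
          exacts [Or.inr ⟨hyA, hy.2⟩, Or.inl ⟨hy.1, hyA⟩]
      _ ≤ volume (U \ A) + volume (A \ K) := measure_union_le _ _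
      _ ≤ β/2 + β/2 := add_le_add hUm.2.le hKm.le
      _ = β := ENNReal.add_halves β
  obtain ⟨g, hg1, hg0, hgcs, hg01⟩ := exists_continuous_one_zero_of_isCompact hKc
    hUo.isClosed_compl (Set.disjoint_left.2 fun x hxK hxU => hxU (hAU (hKA hxK)))
  set H : EuclideanSpace ℝ (Fin n) → ℝ≥0∞ :=
    fun y => ENNReal.ofReal |A.indicator 1 y - g y| with hH
  have hHmeas : Measurable H := by
    apply Measurable.ennreal_ofReal
    exact ((measurable_one.indicator hA).sub (map_continuous g).measurable).abs
  have hHle : ∀ y, H y ≤ (U \ K).indicator 1 y := by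
    intro y
    by_cases hyK : y ∈ K
    · have : A.indicator (1 : EuclideanSpace ℝ (Fin n) → ℝ) y = 1 :=
        Set.indicator_of_mem (hKA hyK) 1
      simp [hH, this, hg1 hyK]
    · by_cases hyU : y ∈ U
      · have h1 : A.indicator (1 : EuclideanSpace ℝ (Fin n) → ℝ) y ∈ Icc (0:ℝ) 1 := by
          by_cases hyA : y ∈ A <;> simp [hyA]
        have h2 := hg01 y
        have : |A.indicator (1 : EuclideanSpace ℝ (Fin n) → ℝ) y - g y| ≤ 1 := by
          rw [abs_le]; constructor <;> [linarith [h1.1, h2.2]; linarith [h1.2, h2.1]]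
        calc H y ≤ ENNReal.ofReal 1 := ENNReal.ofReal_le_ofReal this
          _ ≤ (U \ K).indicator 1 y := by
              have hmem : y ∈ U \ K := ⟨hyU, hyK⟩
              simp [Set.indicator_of_mem hmem]
      · have hyA : y ∉ A := fun hyA => hyU (hAU hyA)
        simp [hH, Set.indicator_of_notMem hyA, hg0 (by exact hyU : y ∈ Uᶜ)]
  have hHint : ∫⁻ y in Ω, H y ≤ β := by
    calc ∫⁻ y in Ω, H y ≤ ∫⁻ y in Ω, (U \ K).indicator 1 y := lintegral_mono hHle
      _ ≤ ∫⁻ y, (U \ K).indicator 1 y := setLIntegral_le_lintegral _ _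
      _ = volume (U \ K) := lintegral_indicator_one (hUo.measurableSet.diff
            hKc.isClosed.measurableSet)
      _ ≤ β := hUK
  have hCc : IsCompact (closure Ω) :=
    Metric.isCompact_of_isClosed_isBounded isClosed_closure hΩb.closure
  have hUC : UniformContinuousOn g (closure Ω) :=
    hCc.uniformContinuousOn_of_continuous (map_continuous g).continuousOn
  set q : ℝ≥0∞ := min 1 ((η/2) / (volume Ω + 1)) with hq
  have hq0 : q ≠ 0 := by
    refine (lt_min one_pos (ENNReal.div_pos ?_ ?_)).ne'
    · simp [ENNReal.div_eq_zero_iff, hη.ne']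
    · exact ENNReal.add_ne_top.2 ⟨hμΩ, ENNReal.one_ne_top⟩
  have hqtop : q ≠ ⊤ := ne_top_of_le_ne_top ENNReal.one_ne_top (min_le_left _ _)
  have hqμ : q * volume Ω ≤ η/2 := by
    calc q * volume Ω ≤ ((η/2) / (volume Ω + 1)) * (volume Ω + 1) := by
          gcongr; exacts [min_le_right _ _, le_self_add]
      _ ≤ η/2 := ENNReal.mul_le_of_le_div le_rfl
  set δ' : ℝ := q.toReal with hδ'
  have hδ'pos : 0 < δ' := ENNReal.toReal_pos hq0 hqtop
  obtain ⟨δ, hδpos, hδ⟩ := Metric.uniformContinuousOn_iff.1 hUC δ' hδ'pos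
  filter_upwards [Metric.tendstoUniformlyOn_iff.1 hconv δ hδpos] with j hj
  have hφja : AEMeasurable (φ j) (volume.restrict Ω) :=
    (hφ j).2.1.continuousOn.aemeasurable mΩ
  have hφha : AEMeasurable φhat (volume.restrict Ω) :=
    hφhat.2.1.continuousOn.aemeasurable mΩ
  have hmid : AEMeasurable (fun x => ENNReal.ofReal |g (φ j x) - g (φhat x)|)
      (volume.restrict Ω) := by
    apply AEMeasurable.ennreal_ofReal
    exact continuous_abs.measurable.comp_aemeasurable
      (((map_continuous g).measurable.comp_aemeasurable hφja).sub
        ((map_continuous g).measurable.comp_aemeasurable hφha))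
  calc ∫⁻ x in Ω, ENNReal.ofReal |A.indicator 1 (φ j x) - A.indicator 1 (φhat x)|
      ≤ ∫⁻ x in Ω, (H (φ j x) + (ENNReal.ofReal |g (φ j x) - g (φhat x)| + H (φhat x))) := by
        refine setLIntegral_mono_ae' mΩ ?_
        filter_upwards with x hx
        have htri : |A.indicator (1 : EuclideanSpace ℝ (Fin n) → ℝ) (φ j x)
            - A.indicator 1 (φhat x)| ≤
            |A.indicator 1 (φ j x) - g (φ j x)| + (|g (φ j x) - g (φhat x)|
            + |g (φhat x) - A.indicator 1 (φhat x)|) := by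
          have := abs_sub_le (A.indicator (1 : EuclideanSpace ℝ (Fin n) → ℝ) (φ j x))
            (g (φ j x)) (A.indicator 1 (φhat x))
          have h2 := abs_sub_le (g (φ j x)) (g (φhat x))
            (A.indicator (1 : EuclideanSpace ℝ (Fin n) → ℝ) (φhat x))
          linarith
        calc ENNReal.ofReal |A.indicator 1 (φ j x) - A.indicator 1 (φhat x)|
            ≤ ENNReal.ofReal (|A.indicator 1 (φ j x) - g (φ j x)| + (|g (φ j x) - g (φhat x)|
              + |g (φhat x) - A.indicator 1 (φhat x)|)) := ENNReal.ofReal_le_ofReal htri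
          _ ≤ ENNReal.ofReal |A.indicator 1 (φ j x) - g (φ j x)|
              + ENNReal.ofReal (|g (φ j x) - g (φhat x)|
              + |g (φhat x) - A.indicator 1 (φhat x)|) := ENNReal.ofReal_add_le
          _ ≤ H (φ j x) + (ENNReal.ofReal |g (φ j x) - g (φhat x)|
                + ENNReal.ofReal |g (φhat x) - A.indicator 1 (φhat x)|) :=
              add_le_add le_rfl ENNReal.ofReal_add_le
          _ = H (φ j x) + (ENNReal.ofReal |g (φ j x) - g (φhat x)| + H (φhat x)) := by
              rw [show |g (φhat x) - A.indicator (1 : EuclideanSpace ℝ (Fin n) → ℝ) (φhat x)|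
                = |A.indicator 1 (φhat x) - g (φhat x)| from abs_sub_comm _ _]
    _ = (∫⁻ x in Ω, H (φ j x)) + ∫⁻ x in Ω, (ENNReal.ofReal |g (φ j x) - g (φhat x)|
          + H (φhat x)) := lintegral_add_left' (hHmeas.comp_aemeasurable hφja) _
    _ = (∫⁻ x in Ω, H (φ j x)) + ((∫⁻ x in Ω, ENNReal.ofReal |g (φ j x) - g (φhat x)|)
          + ∫⁻ x in Ω, H (φhat x)) := by rw [lintegral_add_left' hmid]
    _ ≤ η/2/2 + (η/2 + η/2/2) := by
        gcongr
        · calc ∫⁻ x in Ω, H (φ j x) ≤ c₀ * ∫⁻ y in Ω, H y :=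
                aux_cv_bound hΩo (hφ j) hε (hdet j) H
            _ ≤ c₀ * β := by gcongr
            _ ≤ η/2/2 := hc₀β
        · calc ∫⁻ x in Ω, ENNReal.ofReal |g (φ j x) - g (φhat x)| ≤ ∫⁻ _x in Ω, q := by
                refine setLIntegral_mono_ae' mΩ ?_
                filter_upwards with x hx
                have hd : dist (g (φ j x)) (g (φhat x)) < δ' := by
                  apply hδ _ (subset_closure ((hφ j).1.mapsTo hx))
                    _ (subset_closure (hφhat.1.mapsTo hx))
                  rw [dist_comm]
                  exact hj x hx
                rw [Real.dist_eq] at hd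
                calc ENNReal.ofReal |g (φ j x) - g (φhat x)| ≤ ENNReal.ofReal δ' :=
                      ENNReal.ofReal_le_ofReal hd.le
                  _ = q := ENNReal.ofReal_toReal hqtop
              _ = q * volume Ω := setLIntegral_const Ω q
              _ ≤ η/2 := hqμ
        · calc ∫⁻ x in Ω, H (φhat x) ≤ c₀ * ∫⁻ y in Ω, H y :=
                aux_cv_bound hΩo hφhat hε hdethat H
            _ ≤ c₀ * β := by gcongr
            _ ≤ η/2/2 := hc₀β
    _ = η := by rw [← add_assoc, add_comm (η/2/2) (η/2), add_assoc,
          ENNReal.add_halves, ENNReal.add_halves]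

end IND

section SIMPLE

open scoped ENNReal NNReal Topology

lemma aux_simple_conv {n : ℕ} {Ω : Set (EuclideanSpace ℝ (Fin n))}
    (hΩo : IsOpen Ω) (hΩb : Bornology.IsBounded Ω) {ε : ℝ} (hε : 0 < ε)
    {X : Type*} [MetricSpace X] [MeasurableSpace X] [BorelSpace X]
    {φ : ℕ → EuclideanSpace ℝ (Fin n) → EuclideanSpace ℝ (Fin n)}
    {φhat : EuclideanSpace ℝ (Fin n) → EuclideanSpace ℝ (Fin n)}
    (hφ : ∀ j, IsAdmissibleDiffeo Ω (φ j)) (hφhat : IsAdmissibleDiffeo Ω φhat)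
    (hdet : ∀ j, ∀ x ∈ Ω, ε ≤ (fderiv ℝ (φ j) x).det)
    (hdethat : ∀ x ∈ Ω, ε ≤ (fderiv ℝ φhat x).det)
    (hconv : TendstoUniformlyOn φ φhat atTop Ω)
    (s : SimpleFunc (EuclideanSpace ℝ (Fin n)) X) :
    Tendsto (fun j => ∫⁻ x in Ω, ENNReal.ofReal (dist (s (φ j x)) (s (φhat x)) ^ 2))
      atTop (𝓝 0) := by
  have mΩ : MeasurableSet Ω := hΩo.measurableSet
  set V := s.range with hV
  set M : ℝ≥0∞ := ∑ c ∈ V, ∑ c' ∈ V, ENNReal.ofReal (dist c c' ^ 2) with hM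
  have hMtop : M ≠ ⊤ := by
    rw [hM]
    refine (ENNReal.sum_lt_top.2 fun c _ => (ENNReal.sum_lt_top.2 fun c' _ => ?_)).ne
    exact ENNReal.ofReal_lt_top
  set A : X → Set (EuclideanSpace ℝ (Fin n)) := fun c => s ⁻¹' {c} ∩ Ω with hA
  have hAmeas : ∀ c, MeasurableSet (A c) := fun c =>
    (s.measurableSet_preimage {c}).inter mΩ
  have hpt : ∀ j, ∀ x ∈ Ω, ENNReal.ofReal (dist (s (φ j x)) (s (φhat x)) ^ 2) ≤
      M * ∑ c ∈ V, ENNReal.ofReal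
        |(A c).indicator 1 (φ j x) - (A c).indicator 1 (φhat x)| := by
    intro j x hx
    by_cases heq : s (φ j x) = s (φhat x)
    · simp [heq]
    · have hφjx : φ j x ∈ Ω := (hφ j).1.mapsTo hx
      have hφhx : φhat x ∈ Ω := hφhat.1.mapsTo hx
      set c : X := s (φ j x) with hc
      have hcV : c ∈ V := s.mem_range_self _
      have hterm : ENNReal.ofReal
          |(A c).indicator 1 (φ j x) - (A c).indicator 1 (φhat x)| = 1 := by
        have h1 : φ j x ∈ A c := ⟨by simp [hA, hc], hφjx⟩
        have h2 : φhat x ∉ A c := by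
          rintro ⟨h1', -⟩
          have hsc : s (φhat x) = c := h1'
          exact heq (hc.symm.trans hsc.symm)
        rw [Set.indicator_of_mem h1, Set.indicator_of_notMem h2]
        norm_num
      have hsum1 : (1:ℝ≥0∞) ≤ ∑ c' ∈ V, ENNReal.ofReal
          |(A c').indicator 1 (φ j x) - (A c').indicator 1 (φhat x)| := by
        rw [← hterm]
        exact Finset.single_le_sum (f := fun c' => ENNReal.ofReal
          |(A c').indicator 1 (φ j x) - (A c').indicator 1 (φhat x)|)
          (fun c' _ => zero_le) hcV
      have hLHS : ENNReal.ofReal (dist (s (φ j x)) (s (φhat x)) ^ 2) ≤ M := by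
        rw [hM]
        calc ENNReal.ofReal (dist (s (φ j x)) (s (φhat x)) ^ 2)
            ≤ ∑ c' ∈ V, ENNReal.ofReal (dist (s (φ j x)) c' ^ 2) :=
              Finset.single_le_sum (f := fun c' => ENNReal.ofReal (dist (s (φ j x)) c' ^ 2))
                (fun c' _ => zero_le) (s.mem_range_self _)
          _ ≤ ∑ c ∈ V, ∑ c' ∈ V, ENNReal.ofReal (dist c c' ^ 2) :=
              Finset.single_le_sum (f := fun c => ∑ c' ∈ V, ENNReal.ofReal (dist c c' ^ 2))
                (fun c _ => zero_le) (s.mem_range_self _)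
      calc ENNReal.ofReal (dist (s (φ j x)) (s (φhat x)) ^ 2) ≤ M := hLHS
        _ ≤ M * ∑ c ∈ V, ENNReal.ofReal
            |(A c).indicator 1 (φ j x) - (A c).indicator 1 (φhat x)| :=
          le_mul_of_one_le_right (zero_le) hsum1
  have hbound : ∀ j, ∫⁻ x in Ω, ENNReal.ofReal (dist (s (φ j x)) (s (φhat x)) ^ 2) ≤
      M * ∑ c ∈ V, ∫⁻ x in Ω, ENNReal.ofReal
        |(A c).indicator 1 (φ j x) - (A c).indicator 1 (φhat x)| := by
    intro j
    have hφja : AEMeasurable (φ j) (volume.restrict Ω) :=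
      (hφ j).2.1.continuousOn.aemeasurable mΩ
    have hφha : AEMeasurable φhat (volume.restrict Ω) :=
      hφhat.2.1.continuousOn.aemeasurable mΩ
    have haem : ∀ c : X, AEMeasurable (fun x => ENNReal.ofReal
        |(A c).indicator 1 (φ j x) - (A c).indicator 1 (φhat x)|) (volume.restrict Ω) := by
      intro c
      apply AEMeasurable.ennreal_ofReal
      apply continuous_abs.measurable.comp_aemeasurable
      exact ((measurable_one.indicator (hAmeas c)).comp_aemeasurable hφja).sub
        ((measurable_one.indicator (hAmeas c)).comp_aemeasurable hφha)
    calc ∫⁻ x in Ω, ENNReal.ofReal (dist (s (φ j x)) (s (φhat x)) ^ 2)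
        ≤ ∫⁻ x in Ω, M * ∑ c ∈ V, ENNReal.ofReal
            |(A c).indicator 1 (φ j x) - (A c).indicator 1 (φhat x)| := by
          refine setLIntegral_mono_ae' mΩ ?_
          filter_upwards with x hx
          exact hpt j x hx
      _ = M * ∫⁻ x in Ω, ∑ c ∈ V, ENNReal.ofReal
            |(A c).indicator 1 (φ j x) - (A c).indicator 1 (φhat x)| :=
          lintegral_const_mul' _ _ hMtop
      _ = M * ∑ c ∈ V, ∫⁻ x in Ω, ENNReal.ofReal
            |(A c).indicator 1 (φ j x) - (A c).indicator 1 (φhat x)| := by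
          rw [lintegral_finset_sum' V fun c _ => haem c]
  have hlim : Tendsto (fun j => M * ∑ c ∈ V, ∫⁻ x in Ω, ENNReal.ofReal
      |(A c).indicator 1 (φ j x) - (A c).indicator 1 (φhat x)|) atTop (𝓝 0) := by
    have hsum : Tendsto (fun j => ∑ c ∈ V, ∫⁻ x in Ω, ENNReal.ofReal
        |(A c).indicator 1 (φ j x) - (A c).indicator 1 (φhat x)|) atTop
        (𝓝 (∑ c ∈ V, 0)) := by
      refine tendsto_finset_sum V fun c _ => ?_
      exact aux_indicator_conv hΩo hΩb hε hφ hφhat hdet hdethat hconv (hAmeas c)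
        inter_subset_right
    rw [Finset.sum_const_zero] at hsum
    have := ENNReal.Tendsto.const_mul hsum (Or.inr hMtop)
    simpa using this
  exact tendsto_of_tendsto_of_tendsto_of_le_of_le tendsto_const_nhds hlim
    (fun j => zero_le) hbound

end SIMPLE

section MAIN

open scoped ENNReal NNReal Topology

/-- For `T, R ∈ L²(Ω, X)` with `X` a locally compact Hadamard space, and
admissible diffeomorphisms `φ⁽ʲ⁾ → φ̂` uniformly on `Ω` with Jacobian determinants
bounded below by `ε > 0`, the data terms `∫_Ω d(T∘φ⁽ʲ⁾, R)²` converge to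
`∫_Ω d(T∘φ̂, R)²`. -/
theorem data_term_continuity
    {n : ℕ} (hn : 1 ≤ n)
    (Ω : Set (EuclideanSpace ℝ (Fin n))) (hΩo : IsOpen Ω) (hΩb : Bornology.IsBounded Ω)
    {X : Type*} [MetricSpace X] [CompleteSpace X] [LocallyCompactSpace X]
    [MeasurableSpace X] [BorelSpace X]
    (hgeo : ∀ x y : X, ∃ γ : ℝ → X, γ 0 = x ∧ γ 1 = y ∧
      ∀ s ∈ Icc (0:ℝ) 1, ∀ t ∈ Icc (0:ℝ) 1, dist (γ s) (γ t) = |s - t| * dist x y)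
    (h4 : ∀ x y v w : X, dist x v ^ 2 + dist y w ^ 2 ≤
      dist x w ^ 2 + dist y v ^ 2 + 2 * dist x y * dist v w)
    (T R : EuclideanSpace ℝ (Fin n) → X) (hT : Measurable T) (hR : Measurable R)
    (aT aR : X)
    (hTa : ∫⁻ ω in Ω, ENNReal.ofReal (dist (T ω) aT ^ 2) < ⊤)
    (hRa : ∫⁻ ω in Ω, ENNReal.ofReal (dist (R ω) aR ^ 2) < ⊤)
    (ε : ℝ) (hε : 0 < ε)
    (φ : ℕ → EuclideanSpace ℝ (Fin n) → EuclideanSpace ℝ (Fin n))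
    (φhat : EuclideanSpace ℝ (Fin n) → EuclideanSpace ℝ (Fin n))
    (hφ : ∀ j, IsAdmissibleDiffeo Ω (φ j)) (hφhat : IsAdmissibleDiffeo Ω φhat)
    (hdet : ∀ j, ∀ x ∈ Ω, ε ≤ (fderiv ℝ (φ j) x).det)
    (hdethat : ∀ x ∈ Ω, ε ≤ (fderiv ℝ φhat x).det)
    (hconv : TendstoUniformlyOn φ φhat atTop Ω) :
    Tendsto (fun j => ∫⁻ x in Ω, ENNReal.ofReal (dist (T (φ j x)) (R x) ^ 2))
      atTop (nhds (∫⁻ x in Ω, ENNReal.ofReal (dist (T (φhat x)) (R x) ^ 2))) := by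
  have mΩ : MeasurableSet Ω := hΩo.measurableSet
  have hμΩ : volume Ω ≠ ⊤ := hΩb.measure_lt_top.ne
  haveI hσ : SigmaCompactSpace X := aux_sigma_compact hgeo aT
  haveI hsc : SecondCountableTopology X := EMetric.secondCountable_of_sigmaCompact X
  set c₀ : ℝ≥0∞ := (ENNReal.ofReal ε)⁻¹ with hc₀
  have hc₀top : c₀ ≠ ⊤ := by
    simp [hc₀, ENNReal.inv_ne_top, ENNReal.ofReal_eq_zero, not_le, hε]
  have hφja : ∀ j, AEMeasurable (φ j) (volume.restrict Ω) := fun j =>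
    (hφ j).2.1.continuousOn.aemeasurable mΩ
  have hφha : AEMeasurable φhat (volume.restrict Ω) :=
    hφhat.2.1.continuousOn.aemeasurable mΩ
  have hdistae : ∀ {f g : EuclideanSpace ℝ (Fin n) → X},
      AEMeasurable f (volume.restrict Ω) → AEMeasurable g (volume.restrict Ω) →
      AEMeasurable (fun x => ENNReal.ofReal (dist (f x) (g x) ^ 2)) (volume.restrict Ω) := by
    intro f g hf hg
    have h1 : AEMeasurable (fun x => dist (f x) (g x)) (volume.restrict Ω) :=
      measurable_dist.comp_aemeasurable (hf.prodMk hg)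
    exact (h1.pow_const 2).ennreal_ofReal
  -- Step A: approximation of T by simple functions in the L² sense
  have happrox : ∀ δ : ℝ≥0∞, δ ≠ 0 → ∃ s : SimpleFunc (EuclideanSpace ℝ (Fin n)) X,
      (∫⁻ x in Ω, ENNReal.ofReal (dist (T x) (s x) ^ 2)) < δ := by
    intro δ hδ
    set F : ℕ → SimpleFunc (EuclideanSpace ℝ (Fin n)) X :=
      fun k => SimpleFunc.approxOn T hT univ aT (mem_univ aT) k with hF
    have hlim : Tendsto (fun k => ∫⁻ x in Ω, ENNReal.ofReal (dist (T x) (F k x) ^ 2)) atTop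
        (𝓝 (∫⁻ _x in Ω, (0:ℝ≥0∞))) := by
      refine tendsto_lintegral_of_dominated_convergence
        (fun x => ENNReal.ofReal (dist (T x) aT ^ 2)) (fun k => ?_) (fun k => ?_) hTa.ne ?_
      · exact ((hT.dist (F k).measurable).pow_const 2).ennreal_ofReal
      · filter_upwards with x
        have h := SimpleFunc.edist_approxOn_le hT (mem_univ aT) x k
        rw [edist_dist, edist_dist] at h
        have hdd : dist (F k x) (T x) ≤ dist aT (T x) :=
          (ENNReal.ofReal_le_ofReal_iff dist_nonneg).1 h
        have h2 : dist (T x) (F k x) ≤ dist (T x) aT := by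
          rw [dist_comm (T x) (F k x), dist_comm (T x) aT]; exact hdd
        exact ENNReal.ofReal_le_ofReal
          (by nlinarith [dist_nonneg (x := T x) (y := F k x)])
      · filter_upwards with x
        have h := SimpleFunc.tendsto_approxOn hT (mem_univ aT)
          (by simp : T x ∈ closure (univ : Set X))
        have hd : Tendsto (fun k => dist (T x) (F k x)) atTop (𝓝 0) := by
          have := (tendsto_const_nhds (x := T x) (f := atTop)).dist h
          simpa using this
        have hd2 : Tendsto (fun k => dist (T x) (F k x) ^ 2) atTop (𝓝 0) := by
          have := hd.pow 2
          simpa using this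
        have := ENNReal.tendsto_ofReal hd2
        simpa using this
    rw [lintegral_zero] at hlim
    obtain ⟨k, hk⟩ := (hlim.eventually_lt_const (zero_lt_iff.2 hδ)).exists
    exact ⟨F k, hk⟩
  -- Step B: the T∘φ j vs T∘φhat distance integrals tend to zero
  set D : ℕ → ℝ≥0∞ :=
    fun j => ∫⁻ x in Ω, ENNReal.ofReal (dist (T (φ j x)) (T (φhat x)) ^ 2) with hDdef
  set c3 : ℝ≥0∞ := ENNReal.ofReal 3 with hc3def
  have hc3top : c3 ≠ ⊤ := ENNReal.ofReal_ne_top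
  have hD : Tendsto D atTop (𝓝 0) := by
    rw [ENNReal.tendsto_nhds_zero]
    intro η hη
    set β : ℝ≥0∞ := (η/2/2)/(c3*(c₀+1)) with hβ
    have hden : c3*(c₀+1) ≠ ⊤ :=
      ENNReal.mul_ne_top hc3top (ENNReal.add_ne_top.2 ⟨hc₀top, ENNReal.one_ne_top⟩)
    have hβ0 : β ≠ 0 := by
      refine (ENNReal.div_pos ?_ hden).ne'
      simp only [ne_eq, ENNReal.div_eq_zero_iff]
      push_neg
      exact ⟨⟨hη.ne', by norm_num⟩, by norm_num⟩
    obtain ⟨s, hs⟩ := happrox β hβ0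
    have hterm : ∀ ψ, IsAdmissibleDiffeo Ω ψ → (∀ x ∈ Ω, ε ≤ (fderiv ℝ ψ x).det) →
        c3 * ∫⁻ x in Ω, ENNReal.ofReal (dist (T (ψ x)) (s (ψ x)) ^ 2) ≤ η/2/2 := by
      intro ψ hψ hdψ
      calc c3 * ∫⁻ x in Ω, ENNReal.ofReal (dist (T (ψ x)) (s (ψ x)) ^ 2)
          ≤ c3 * (c₀ * ∫⁻ y in Ω, ENNReal.ofReal (dist (T y) (s y) ^ 2)) := by
            gcongr
            exact aux_cv_bound hΩo hψ hε hdψ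
              (fun y => ENNReal.ofReal (dist (T y) (s y) ^ 2))
        _ ≤ (c3 * (c₀+1)) * β := by
            rw [← mul_assoc]
            exact mul_le_mul' (mul_le_mul_right le_self_add c3) hs.le
        _ ≤ η/2/2 := ENNReal.mul_le_of_le_div' le_rfl
    have hS := aux_simple_conv hΩo hΩb hε hφ hφhat hdet hdethat hconv s
    have hSc : Tendsto (fun j => c3 * ∫⁻ x in Ω,
        ENNReal.ofReal (dist (s (φ j x)) (s (φhat x)) ^ 2)) atTop (𝓝 0) := by
      have := ENNReal.Tendsto.const_mul hS (Or.inr hc3top)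
      simpa using this
    filter_upwards [(hSc.eventually_lt_const (ENNReal.half_pos hη.ne')).mono
      fun j hj => hj.le] with j hj
    have hmeas_h : Measurable (fun y => ENNReal.ofReal (dist (T y) (s y) ^ 2)) :=
      ((hT.dist s.measurable).pow_const 2).ennreal_ofReal
    have h1a : AEMeasurable
        (fun x => c3 * ENNReal.ofReal (dist (T (φ j x)) (s (φ j x)) ^ 2))
        (volume.restrict Ω) :=
      (hmeas_h.comp_aemeasurable (hφja j)).const_mul c3
    have h2a : AEMeasurable
        (fun x => c3 * ENNReal.ofReal (dist (s (φ j x)) (s (φhat x)) ^ 2))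
        (volume.restrict Ω) := by
      apply AEMeasurable.const_mul
      exact ((measurable_dist.comp_aemeasurable
        ((s.measurable.comp_aemeasurable (hφja j)).prodMk
          (s.measurable.comp_aemeasurable hφha))).pow_const 2).ennreal_ofReal
    calc D j
        ≤ ∫⁻ x in Ω, (c3 * ENNReal.ofReal (dist (T (φ j x)) (s (φ j x)) ^ 2)
          + (c3 * ENNReal.ofReal (dist (s (φ j x)) (s (φhat x)) ^ 2)
          + c3 * ENNReal.ofReal (dist (s (φhat x)) (T (φhat x)) ^ 2))) := by
          refine setLIntegral_mono_ae' mΩ ?_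
          filter_upwards with x hx
          have hre := aux_sq_dist3 (T (φ j x)) (s (φ j x)) (s (φhat x)) (T (φhat x))
          calc ENNReal.ofReal (dist (T (φ j x)) (T (φhat x)) ^ 2)
              ≤ ENNReal.ofReal (3 * dist (T (φ j x)) (s (φ j x)) ^ 2
                + (3 * dist (s (φ j x)) (s (φhat x)) ^ 2
                + 3 * dist (s (φhat x)) (T (φhat x)) ^ 2)) := by
                apply ENNReal.ofReal_le_ofReal; linarith
            _ ≤ ENNReal.ofReal (3 * dist (T (φ j x)) (s (φ j x)) ^ 2)
                + ENNReal.ofReal (3 * dist (s (φ j x)) (s (φhat x)) ^ 2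
                + 3 * dist (s (φhat x)) (T (φhat x)) ^ 2) := ENNReal.ofReal_add_le
            _ ≤ ENNReal.ofReal (3 * dist (T (φ j x)) (s (φ j x)) ^ 2)
                + (ENNReal.ofReal (3 * dist (s (φ j x)) (s (φhat x)) ^ 2)
                + ENNReal.ofReal (3 * dist (s (φhat x)) (T (φhat x)) ^ 2)) :=
                add_le_add le_rfl ENNReal.ofReal_add_le
            _ = c3 * ENNReal.ofReal (dist (T (φ j x)) (s (φ j x)) ^ 2)
                + (c3 * ENNReal.ofReal (dist (s (φ j x)) (s (φhat x)) ^ 2)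
                + c3 * ENNReal.ofReal (dist (s (φhat x)) (T (φhat x)) ^ 2)) := by
                rw [ENNReal.ofReal_mul (by norm_num : (0:ℝ) ≤ 3),
                  ENNReal.ofReal_mul (by norm_num : (0:ℝ) ≤ 3),
                  ENNReal.ofReal_mul (by norm_num : (0:ℝ) ≤ 3)]
      _ = (∫⁻ x in Ω, c3 * ENNReal.ofReal (dist (T (φ j x)) (s (φ j x)) ^ 2))
          + ((∫⁻ x in Ω, c3 * ENNReal.ofReal (dist (s (φ j x)) (s (φhat x)) ^ 2))
          + ∫⁻ x in Ω, c3 * ENNReal.ofReal (dist (s (φhat x)) (T (φhat x)) ^ 2)) := by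
          rw [lintegral_add_left' h1a, lintegral_add_left' h2a]
      _ ≤ η/2/2 + (η/2 + η/2/2) := by
          gcongr
          · rw [lintegral_const_mul' _ _ hc3top]
            exact hterm (φ j) (hφ j) (hdet j)
          · rw [lintegral_const_mul' _ _ hc3top]
            exact hj
          · rw [lintegral_const_mul' _ _ hc3top]
            have heq : ∫⁻ x in Ω, ENNReal.ofReal (dist (s (φhat x)) (T (φhat x)) ^ 2)
                = ∫⁻ x in Ω, ENNReal.ofReal (dist (T (φhat x)) (s (φhat x)) ^ 2) :=
              lintegral_congr fun x => by rw [dist_comm]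
            rw [heq]
            exact hterm φhat hφhat hdethat
      _ = η := by rw [← add_assoc, add_comm (η/2/2) (η/2), add_assoc,
            ENNReal.add_halves, ENNReal.add_halves]
  -- Step C: finiteness of the limit integral
  set Ih : ℝ≥0∞ := ∫⁻ x in Ω, ENNReal.ofReal (dist (T (φhat x)) (R x) ^ 2) with hIh
  have hIhtop : Ih ≠ ⊤ := by
    have hJ1 : (∫⁻ x in Ω, ENNReal.ofReal (dist (T (φhat x)) aT ^ 2)) < ⊤ := by
      calc ∫⁻ x in Ω, ENNReal.ofReal (dist (T (φhat x)) aT ^ 2)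
          ≤ c₀ * ∫⁻ y in Ω, ENNReal.ofReal (dist (T y) aT ^ 2) :=
            aux_cv_bound hΩo hφhat hε hdethat (fun y => ENNReal.ofReal (dist (T y) aT ^ 2))
        _ < ⊤ := ENNReal.mul_lt_top hc₀top.lt_top hTa
    have hJ2 : (∫⁻ _x in Ω, ENNReal.ofReal (dist aT aR ^ 2)) < ⊤ := by
      rw [setLIntegral_const]
      exact ENNReal.mul_lt_top ENNReal.ofReal_lt_top hμΩ.lt_top
    have hJ3 : (∫⁻ x in Ω, ENNReal.ofReal (dist aR (R x) ^ 2)) < ⊤ := by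
      have heq : ∫⁻ x in Ω, ENNReal.ofReal (dist aR (R x) ^ 2)
          = ∫⁻ x in Ω, ENNReal.ofReal (dist (R x) aR ^ 2) :=
        lintegral_congr fun x => by rw [dist_comm]
      rw [heq]; exact hRa
    have hb1 : AEMeasurable (fun x => c3 * ENNReal.ofReal (dist (T (φhat x)) aT ^ 2))
        (volume.restrict Ω) :=
      (hdistae (hT.comp_aemeasurable hφha) aemeasurable_const).const_mul c3
    have hb2 : AEMeasurable (fun _x : EuclideanSpace ℝ (Fin n) =>
        c3 * ENNReal.ofReal (dist aT aR ^ 2)) (volume.restrict Ω) := aemeasurable_const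
    have hIhle : Ih ≤ (∫⁻ x in Ω, c3 * ENNReal.ofReal (dist (T (φhat x)) aT ^ 2))
        + ((∫⁻ _x in Ω, c3 * ENNReal.ofReal (dist aT aR ^ 2))
        + ∫⁻ x in Ω, c3 * ENNReal.ofReal (dist aR (R x) ^ 2)) := by
      rw [← lintegral_add_left' hb2, ← lintegral_add_left' hb1]
      refine setLIntegral_mono_ae' mΩ ?_
      filter_upwards with x hx
      have hre := aux_sq_dist3 (T (φhat x)) aT aR (R x)
      calc ENNReal.ofReal (dist (T (φhat x)) (R x) ^ 2)
          ≤ ENNReal.ofReal (3 * dist (T (φhat x)) aT ^ 2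
            + (3 * dist aT aR ^ 2 + 3 * dist aR (R x) ^ 2)) := by
            apply ENNReal.ofReal_le_ofReal; linarith
        _ ≤ ENNReal.ofReal (3 * dist (T (φhat x)) aT ^ 2)
            + ENNReal.ofReal (3 * dist aT aR ^ 2 + 3 * dist aR (R x) ^ 2) :=
            ENNReal.ofReal_add_le
        _ ≤ ENNReal.ofReal (3 * dist (T (φhat x)) aT ^ 2)
            + (ENNReal.ofReal (3 * dist aT aR ^ 2)
            + ENNReal.ofReal (3 * dist aR (R x) ^ 2)) :=
            add_le_add le_rfl ENNReal.ofReal_add_le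
        _ = c3 * ENNReal.ofReal (dist (T (φhat x)) aT ^ 2)
            + (c3 * ENNReal.ofReal (dist aT aR ^ 2)
            + c3 * ENNReal.ofReal (dist aR (R x) ^ 2)) := by
            rw [ENNReal.ofReal_mul (by norm_num : (0:ℝ) ≤ 3),
              ENNReal.ofReal_mul (by norm_num : (0:ℝ) ≤ 3),
              ENNReal.ofReal_mul (by norm_num : (0:ℝ) ≤ 3)]
    refine (lt_of_le_of_lt hIhle ?_).ne
    rw [lintegral_const_mul' _ _ hc3top, lintegral_const_mul' _ _ hc3top,
      lintegral_const_mul' _ _ hc3top]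
    exact ENNReal.add_lt_top.2 ⟨ENNReal.mul_lt_top hc3top.lt_top hJ1,
      ENNReal.add_lt_top.2 ⟨ENNReal.mul_lt_top hc3top.lt_top hJ2,
        ENNReal.mul_lt_top hc3top.lt_top hJ3⟩⟩
  -- Step D: conclusion
  rw [ENNReal.tendsto_nhds hIhtop]
  intro η hη
  set η' : ℝ≥0∞ := min η 1 with hη'def
  have hη'0 : η' ≠ 0 := (lt_min hη one_pos).ne'
  have hη'le1 : η' ≤ 1 := min_le_right _ _
  have hη'leη : η' ≤ η := min_le_left _ _
  set cc : ℝ≥0∞ := Ih + 1 with hcc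
  have hcctop : cc ≠ ⊤ := ENNReal.add_ne_top.2 ⟨hIhtop, ENNReal.one_ne_top⟩
  set θt : ℝ≥0∞ := min 1 (η'/2/2 / cc) with hθt
  have hθt0 : θt ≠ 0 := by
    refine (lt_min one_pos (ENNReal.div_pos ?_ hcctop)).ne'
    exact (ENNReal.half_pos (ENNReal.half_pos hη'0).ne').ne'
  have hθttop : θt ≠ ⊤ := ne_top_of_le_ne_top ENNReal.one_ne_top (min_le_left _ _)
  set θ : ℝ := θt.toReal with hθ
  have hθpos : 0 < θ := ENNReal.toReal_pos hθt0 hθttop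
  have hoθ : ENNReal.ofReal θ = θt := ENNReal.ofReal_toReal hθttop
  have hθc : θt * cc ≤ η'/2/2 := by
    calc θt * cc ≤ (η'/2/2 / cc) * cc := by gcongr; exact min_le_right _ _
      _ ≤ η'/2/2 := ENNReal.mul_le_of_le_div le_rfl
  set c2 : ℝ≥0∞ := ENNReal.ofReal (1 + 1/θ) with hc2
  have hc2top : c2 ≠ ⊤ := ENNReal.ofReal_ne_top
  have ho1θ : ENNReal.ofReal (1 + θ) = 1 + θt := by
    rw [ENNReal.ofReal_add zero_le_one hθpos.le, ENNReal.ofReal_one, hoθ]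
  have h1θtop : (1 : ℝ≥0∞) + θt ≠ ⊤ := ENNReal.add_ne_top.2 ⟨ENNReal.one_ne_top, hθttop⟩
  have hmφh : AEMeasurable (fun x => ENNReal.ofReal (dist (T (φhat x)) (R x) ^ 2))
      (volume.restrict Ω) := hdistae (hT.comp_aemeasurable hφha) hR.aemeasurable
  have hmφj : ∀ j, AEMeasurable (fun x => ENNReal.ofReal (dist (T (φ j x)) (R x) ^ 2))
      (volume.restrict Ω) := fun j => hdistae (hT.comp_aemeasurable (hφja j)) hR.aemeasurable
  have hup : ∀ j, (∫⁻ x in Ω, ENNReal.ofReal (dist (T (φ j x)) (R x) ^ 2))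
      ≤ (1 + θt) * Ih + c2 * D j := by
    intro j
    calc ∫⁻ x in Ω, ENNReal.ofReal (dist (T (φ j x)) (R x) ^ 2)
        ≤ ∫⁻ x in Ω, ((1 + θt) * ENNReal.ofReal (dist (T (φhat x)) (R x) ^ 2)
          + c2 * ENNReal.ofReal (dist (T (φ j x)) (T (φhat x)) ^ 2)) := by
          refine setLIntegral_mono_ae' mΩ ?_
          filter_upwards with x hx
          have hre := aux_sq_dist_weighted hθpos (T (φ j x)) (T (φhat x)) (R x)
          calc ENNReal.ofReal (dist (T (φ j x)) (R x) ^ 2)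
              ≤ ENNReal.ofReal ((1 + θ) * dist (T (φhat x)) (R x) ^ 2
                + (1 + 1/θ) * dist (T (φ j x)) (T (φhat x)) ^ 2) :=
                ENNReal.ofReal_le_ofReal hre
            _ ≤ ENNReal.ofReal ((1 + θ) * dist (T (φhat x)) (R x) ^ 2)
                + ENNReal.ofReal ((1 + 1/θ) * dist (T (φ j x)) (T (φhat x)) ^ 2) :=
                ENNReal.ofReal_add_le
            _ = (1 + θt) * ENNReal.ofReal (dist (T (φhat x)) (R x) ^ 2)
                + c2 * ENNReal.ofReal (dist (T (φ j x)) (T (φhat x)) ^ 2) := by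
                rw [ENNReal.ofReal_mul (by positivity), ENNReal.ofReal_mul (by positivity),
                  ho1θ]
      _ = (1 + θt) * Ih + c2 * D j := by
          rw [lintegral_add_left' (hmφh.const_mul _), lintegral_const_mul' _ _ h1θtop,
            lintegral_const_mul' _ _ hc2top]
  have hlo : ∀ j, Ih ≤ (1 + θt) * (∫⁻ x in Ω, ENNReal.ofReal (dist (T (φ j x)) (R x) ^ 2))
      + c2 * D j := by
    intro j
    calc Ih ≤ ∫⁻ x in Ω, ((1 + θt) * ENNReal.ofReal (dist (T (φ j x)) (R x) ^ 2)
          + c2 * ENNReal.ofReal (dist (T (φ j x)) (T (φhat x)) ^ 2)) := by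
          refine setLIntegral_mono_ae' mΩ ?_
          filter_upwards with x hx
          have hre := aux_sq_dist_weighted hθpos (T (φhat x)) (T (φ j x)) (R x)
          calc ENNReal.ofReal (dist (T (φhat x)) (R x) ^ 2)
              ≤ ENNReal.ofReal ((1 + θ) * dist (T (φ j x)) (R x) ^ 2
                + (1 + 1/θ) * dist (T (φhat x)) (T (φ j x)) ^ 2) :=
                ENNReal.ofReal_le_ofReal hre
            _ ≤ ENNReal.ofReal ((1 + θ) * dist (T (φ j x)) (R x) ^ 2)
                + ENNReal.ofReal ((1 + 1/θ) * dist (T (φhat x)) (T (φ j x)) ^ 2) :=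
                ENNReal.ofReal_add_le
            _ = (1 + θt) * ENNReal.ofReal (dist (T (φ j x)) (R x) ^ 2)
                + c2 * ENNReal.ofReal (dist (T (φ j x)) (T (φhat x)) ^ 2) := by
                rw [ENNReal.ofReal_mul (by positivity), ENNReal.ofReal_mul (by positivity),
                  ho1θ, dist_comm (T (φhat x)) (T (φ j x))]
      _ = (1 + θt) * (∫⁻ x in Ω, ENNReal.ofReal (dist (T (φ j x)) (R x) ^ 2)) + c2 * D j := by
          rw [lintegral_add_left' ((hmφj j).const_mul _), lintegral_const_mul' _ _ h1θtop,
            lintegral_const_mul' _ _ hc2top]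
  have hDev : ∀ᶠ j in atTop, c2 * D j ≤ η'/2/2 := by
    have h := ENNReal.Tendsto.const_mul hD (Or.inr hc2top)
    rw [mul_zero] at h
    exact (h.eventually_lt_const (ENNReal.half_pos (ENNReal.half_pos hη'0).ne')).mono
      fun j hj => hj.le
  filter_upwards [hDev] with j hj
  have hupper : (∫⁻ x in Ω, ENNReal.ofReal (dist (T (φ j x)) (R x) ^ 2)) ≤ Ih + η' := by
    calc ∫⁻ x in Ω, ENNReal.ofReal (dist (T (φ j x)) (R x) ^ 2)
        ≤ (1 + θt) * Ih + c2 * D j := hup j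
      _ = Ih + θt * Ih + c2 * D j := by rw [add_mul, one_mul]
      _ ≤ Ih + θt * cc + η'/2/2 :=
          add_le_add (add_le_add le_rfl (mul_le_mul_right le_self_add θt)) hj
      _ ≤ Ih + η'/2/2 + η'/2/2 := by gcongr
      _ = Ih + η'/2 := by rw [add_assoc, ENNReal.add_halves]
      _ ≤ Ih + η' := by
          gcongr
          exact ENNReal.half_le_self
  have hlower : Ih ≤ (∫⁻ x in Ω, ENNReal.ofReal (dist (T (φ j x)) (R x) ^ 2)) + η' := by
    calc Ih ≤ (1 + θt) * (∫⁻ x in Ω, ENNReal.ofReal (dist (T (φ j x)) (R x) ^ 2))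
          + c2 * D j := hlo j
      _ = (∫⁻ x in Ω, ENNReal.ofReal (dist (T (φ j x)) (R x) ^ 2))
          + θt * (∫⁻ x in Ω, ENNReal.ofReal (dist (T (φ j x)) (R x) ^ 2)) + c2 * D j := by
          rw [add_mul, one_mul]
      _ ≤ (∫⁻ x in Ω, ENNReal.ofReal (dist (T (φ j x)) (R x) ^ 2))
          + θt * (Ih + η') + η'/2/2 :=
          add_le_add (add_le_add le_rfl (mul_le_mul_right hupper θt)) hj
      _ ≤ (∫⁻ x in Ω, ENNReal.ofReal (dist (T (φ j x)) (R x) ^ 2))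
          + θt * cc + η'/2/2 := by
          gcongr
          exact add_le_add_right hη'le1 _
      _ ≤ (∫⁻ x in Ω, ENNReal.ofReal (dist (T (φ j x)) (R x) ^ 2))
          + η'/2/2 + η'/2/2 := by gcongr
      _ = (∫⁻ x in Ω, ENNReal.ofReal (dist (T (φ j x)) (R x) ^ 2)) + η'/2 := by
          rw [add_assoc, ENNReal.add_halves]
      _ ≤ (∫⁻ x in Ω, ENNReal.ofReal (dist (T (φ j x)) (R x) ^ 2)) + η' := by
          gcongr
          exact ENNReal.half_le_self
  refine Set.mem_Icc.2 ⟨?_, hupper.trans (add_le_add_right hη'leη _)⟩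
  calc Ih - η ≤ Ih - η' := tsub_le_tsub_left hη'leη _
    _ ≤ _ := tsub_le_iff_right.2 hlower

end MAIN
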